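/- For all x ∈ ℝ and y ∈ [−π/2, π/2] with (x,y) ≠ (0,0) and (x+1,y) ≠ (0,0): (cosh(x+1) − cos y)/((x+1)² + y²) ≤ e·((e²+e+1)/(e²+e))² · (cosh(x) − cos y)/(x² + y²). -/

import Mathlib

open Real

/-- `sinh t ≤ t * cosh t` for `t ≥ 0`. -/
lemma aux_sinh_le_mul_cosh {t : ℝ} (ht : 0 ≤ t) : Real.sinh t ≤ t * Real.cosh t := by
  have hd : ∀ s : ℝ, HasDerivAt (fun u => u * Real.cosh u - Real.sinh u) (s * Real.sinh s) s := by
    intro s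
    have h1 := (hasDerivAt_id s).mul (Real.hasDerivAt_cosh s)
    have h2 := Real.hasDerivAt_sinh s
    convert h1.sub h2 using 1
    · rfl
    · rfl
    · rfl
    · simp [id_eq]
  have mono : MonotoneOn (fun u => u * Real.cosh u - Real.sinh u) (Set.Ici (0:ℝ)) := by
    apply monotoneOn_of_deriv_nonneg (convex_Ici 0)
    · exact ((continuous_id.mul Real.continuous_cosh).sub Real.continuous_sinh).continuousOn
    · intro s hs
      exact (hd s).differentiableAt.differentiableWithinAt
    · intro s hs
      rw [interior_Ici, Set.mem_Ioi] at hs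
      rw [(hd s).deriv]
      exact mul_nonneg hs.le (Real.sinh_nonneg_iff.2 hs.le)
  have h := mono Set.self_mem_Ici (Set.mem_Ici.2 ht) ht
  simpa using h

/-- `b * sinh a ≤ a * sinh b` for `0 ≤ a ≤ b`. -/
lemma aux_mul_sinh_le {a b : ℝ} (ha : 0 ≤ a) (hab : a ≤ b) :
    b * Real.sinh a ≤ a * Real.sinh b := by
  have hd : ∀ s : ℝ, HasDerivAt (fun u => a * Real.sinh u - Real.sinh a * u)
      (a * Real.cosh s - Real.sinh a) s := by
    intro s
    have h1 := (Real.hasDerivAt_sinh s).const_mul a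
    have h2 := (hasDerivAt_id s).const_mul (Real.sinh a)
    convert h1.sub h2 using 1
    · rfl
    · rfl
    · rfl
    · simp [id_eq]
  have mono : MonotoneOn (fun u => a * Real.sinh u - Real.sinh a * u) (Set.Ici a) := by
    apply monotoneOn_of_deriv_nonneg (convex_Ici a)
    · exact ((continuous_const.mul Real.continuous_sinh).sub (continuous_const.mul continuous_id)).continuousOn
    · intro s hs
      exact (hd s).differentiableAt.differentiableWithinAt
    · intro s hs
      rw [interior_Ici, Set.mem_Ioi] at hs
      rw [(hd s).deriv]
      have h1 : Real.sinh a ≤ a * Real.cosh a := aux_sinh_le_mul_cosh ha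
      have h2 : Real.cosh a ≤ Real.cosh s := by
        rw [Real.cosh_le_cosh]
        rw [abs_of_nonneg ha, abs_of_nonneg (le_trans ha hs.le)]
        exact hs.le
      nlinarith
  have h := mono Set.self_mem_Ici (Set.mem_Ici.2 hab) hab
  simp only [sub_le_sub_iff] at h
  nlinarith [h]

/-- half-angle: `cosh t = 2 * sinh (t/2) ^ 2 + 1`. -/
lemma aux_cosh_half (t : ℝ) : Real.cosh t = 2 * Real.sinh (t / 2) ^ 2 + 1 := by
  have h1 : Real.cosh (2 * (t / 2)) = Real.cosh (t / 2) ^ 2 + Real.sinh (t / 2) ^ 2 :=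
    Real.cosh_two_mul _
  have h2 : Real.cosh (t / 2) ^ 2 = Real.sinh (t / 2) ^ 2 + 1 := Real.cosh_sq _
  have h3 : (2 : ℝ) * (t / 2) = t := by ring
  rw [h3] at h1
  linarith

/-- `(cosh t - 1)/t^2` is monotone: `b^2 (cosh a - 1) ≤ a^2 (cosh b - 1)` for `0 ≤ a ≤ b`. -/
lemma aux_lemA {a b : ℝ} (ha : 0 ≤ a) (hab : a ≤ b) :
    b ^ 2 * (Real.cosh a - 1) ≤ a ^ 2 * (Real.cosh b - 1) := by
  have h := aux_mul_sinh_le (by linarith : (0:ℝ) ≤ a / 2) (by linarith : a / 2 ≤ b / 2)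
  have hs : 0 ≤ Real.sinh (a / 2) := Real.sinh_nonneg_iff.2 (by linarith)
  have hb : 0 ≤ b := le_trans ha hab
  have h1 : 0 ≤ b / 2 * Real.sinh (a / 2) := mul_nonneg (by linarith) hs
  have hsq : (b / 2 * Real.sinh (a / 2)) ^ 2 ≤ (a / 2 * Real.sinh (b / 2)) ^ 2 := by
    nlinarith
  rw [aux_cosh_half a, aux_cosh_half b]
  nlinarith [hsq]

/-- `cosh b - cosh a ≥ (b^2 - a^2)/2` for `0 ≤ a ≤ b`. -/
lemma aux_cosh_diff {a b : ℝ} (ha : 0 ≤ a) (hab : a ≤ b) :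
    (b ^ 2 - a ^ 2) / 2 ≤ Real.cosh b - Real.cosh a := by
  set d := b - a with hd
  have hd0 : 0 ≤ d := by linarith
  have h1 : Real.cosh b = Real.cosh a * Real.cosh d + Real.sinh a * Real.sinh d := by
    rw [← Real.cosh_add, hd]
    ring_nf
  have h2 : d ^ 2 / 2 ≤ Real.cosh d - 1 := by
    have := aux_lemA (le_refl (0:ℝ)) hd0
    rw [aux_cosh_half d]
    nlinarith [Real.self_le_sinh_iff.2 (by linarith : (0:ℝ) ≤ d / 2)]
  have h3 : a ≤ Real.sinh a := Real.self_le_sinh_iff.2 ha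
  have h4 : d ≤ Real.sinh d := Real.self_le_sinh_iff.2 hd0
  have h5 : (1:ℝ) ≤ Real.cosh a := Real.one_le_cosh a
  have h6 : 0 ≤ Real.sinh a := Real.sinh_nonneg_iff.2 ha
  have h7 : 0 ≤ Real.sinh d := Real.sinh_nonneg_iff.2 hd0
  nlinarith [mul_le_mul h3 h4 hd0 h6]

/-- Key monotonicity: for `0 ≤ a ≤ b` and `|y| ≤ π/2`,
`(cosh a - cos y)(b² + y²) ≤ (cosh b - cos y)(a² + y²)`. -/
lemma aux_mono {a b y : ℝ} (ha : 0 ≤ a) (hab : a ≤ b) :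
    (Real.cosh a - Real.cos y) * (b ^ 2 + y ^ 2)
      ≤ (Real.cosh b - Real.cos y) * (a ^ 2 + y ^ 2) := by
  have hA := aux_lemA ha hab
  have hB : 1 - Real.cos y ≤ y ^ 2 / 2 := by
    have := Real.one_sub_sq_div_two_le_cos (x := y)
    linarith
  have hC := aux_cosh_diff ha hab
  have hba : 0 ≤ b ^ 2 - a ^ 2 := by nlinarith
  have hy2 : 0 ≤ y ^ 2 := sq_nonneg y
  nlinarith [mul_le_mul_of_nonneg_left hB hba, mul_le_mul_of_nonneg_left hC hy2]


lemma aux_C_lb : (3.28 : ℝ) ≤ Real.exp 1 * ((Real.exp 1 ^ 2 + Real.exp 1 + 1) / (Real.exp 1 ^ 2 + Real.exp 1)) ^ 2 := by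
  set e := Real.exp 1 with he
  have he1 : (2.7182 : ℝ) < e := lt_trans (by norm_num) Real.exp_one_gt_d9
  have he2 : e < 2.7183 := lt_trans Real.exp_one_lt_d9 (by norm_num)
  have he0 : (0:ℝ) < e := lt_trans (by norm_num) he1
  have h2lo : (7.3886 : ℝ) < e^2 := by nlinarith
  have h2hi : e^2 < 7.38916 := by nlinarith
  have h3lo : (20.0837:ℝ) < e^3 := by nlinarith
  have h3hi : e^3 < 20.0861 := by nlinarith
  have h4lo : (54.591:ℝ) < e^4 := by nlinarith
  have h4hi : e^4 < 54.601 := by nlinarith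
  have h5lo : (148.39:ℝ) < e^5 := by nlinarith
  have hB : (0:ℝ) < (e^2 + e)^2 := by positivity
  rw [div_pow, ← mul_div_assoc, le_div_iff₀ hB]
  nlinarith

lemma aux_cosh3_ub : Real.cosh 3 ≤ 10.08 := by
  have he1 : (2.7182 : ℝ) < Real.exp 1 := lt_trans (by norm_num) Real.exp_one_gt_d9
  have he2 : Real.exp 1 < 2.7183 := lt_trans Real.exp_one_lt_d9 (by norm_num)
  have h3 : Real.exp 3 = Real.exp 1 ^ 3 := by
    rw [show (3:ℝ) = 1 + 1 + 1 by norm_num, Real.exp_add, Real.exp_add]; ring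
  have h2lo : (7.3886 : ℝ) < Real.exp 1 ^ 2 := by nlinarith
  have h2hi : Real.exp 1 ^ 2 < 7.38916 := by nlinarith
  have h3lo : (20.0837:ℝ) < Real.exp 3 := by rw [h3]; nlinarith
  have h3hi : Real.exp 3 < 20.0861 := by rw [h3]; nlinarith
  have hpos := Real.exp_pos 3
  have hid : Real.exp 3 * (Real.exp 3)⁻¹ = 1 := mul_inv_cancel₀ (ne_of_gt hpos)
  have hinv : (Real.exp 3)⁻¹ ≤ 0.05 := by
    nlinarith [inv_nonneg.2 hpos.le]
  rw [Real.cosh_eq, Real.exp_neg]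
  linarith

lemma aux_key2 {x : ℝ} (hx : 2 ≤ x) :
    Real.cosh (x + 1) - 1 ≤
      Real.exp 1 * ((Real.exp 1 ^ 2 + Real.exp 1 + 1) / (Real.exp 1 ^ 2 + Real.exp 1)) ^ 2 *
        (Real.cosh x - 1) := by
  set e := Real.exp 1 with he
  set u := Real.exp x with hu
  have he0 : (0:ℝ) < e := Real.exp_pos 1
  have he1 : (1:ℝ) < e := by
    have := Real.exp_one_gt_d9; simp only [← he] at this; linarith
  have hu0 : (0:ℝ) < u := Real.exp_pos x
  have hue : e ^ 2 ≤ u := by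
    have h2 : Real.exp 2 = e ^ 2 := by
      rw [show (2:ℝ) = 1 + 1 by norm_num, Real.exp_add]; ring
    rw [← h2]
    exact Real.exp_le_exp.2 hx
  have hu1 : (1:ℝ) < u := by nlinarith
  have heu1 : (1:ℝ) < e * u := by nlinarith
  have hlin : (e + 1) * (e * u - 1) ≤ (e ^ 2 + e + 1) * (u - 1) := by nlinarith
  have hsq : ((e + 1) * (e * u - 1)) ^ 2 ≤ ((e ^ 2 + e + 1) * (u - 1)) ^ 2 := by
    have hnn : (0:ℝ) ≤ (e + 1) * (e * u - 1) := by nlinarith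
    nlinarith
  have h1 : Real.cosh (x + 1) - 1 = (e * u - 1) ^ 2 / (2 * (e * u)) := by
    rw [Real.cosh_eq, Real.exp_neg, Real.exp_add, ← hu, ← he]
    field_simp
    ring
  have h2 : Real.cosh x - 1 = (u - 1) ^ 2 / (2 * u) := by
    rw [Real.cosh_eq, Real.exp_neg, ← hu]
    field_simp
    ring
  have hR : e * ((e ^ 2 + e + 1) / (e ^ 2 + e)) ^ 2 * ((u - 1) ^ 2 / (2 * u)) =
      ((e ^ 2 + e + 1) * (u - 1)) ^ 2 / (2 * u * e * (e + 1) ^ 2) := by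
    have hB : e ^ 2 + e ≠ 0 := by positivity
    field_simp
  rw [h1, h2, hR, div_le_div_iff₀ (by positivity) (by positivity)]
  nlinarith [mul_le_mul_of_nonneg_left hsq (by positivity : (0:ℝ) ≤ 2 * u * e)]

lemma aux_pos {a b : ℝ} (h : (a, b) ≠ (0, 0)) : 0 < a ^ 2 + b ^ 2 := by
  rcases eq_or_ne a 0 with rfl | ha
  · have hb : b ≠ 0 := by intro hb; exact h (by simp [hb])
    have h2 : 0 < b ^ 2 := lt_of_le_of_ne (sq_nonneg b) (Ne.symm (pow_ne_zero 2 hb))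
    nlinarith [sq_nonneg (0:ℝ)]
  · have h2 : 0 < a ^ 2 := lt_of_le_of_ne (sq_nonneg a) (Ne.symm (pow_ne_zero 2 ha))
    nlinarith [sq_nonneg b]

lemma aux_J {y : ℝ} (hy0 : y ≠ 0) (hy : |y| ≤ π / 2) :
    (7 : ℝ) / 20 * y ^ 2 ≤ 1 - Real.cos y := by
  set s := |y| with hs
  have hs0 : 0 < s := abs_pos.2 hy0
  have hpi : π < 3.1416 := Real.pi_lt_d4
  have hs2 : s ≤ 1.5708 := by rw [hs]; linarith
  have hcos : Real.cos y = Real.cos s := (Real.cos_abs y).symm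
  have h2m : 1 - Real.cos s = 2 * Real.sin (s / 2) ^ 2 := by
    have hc2 : Real.cos (2 * (s / 2)) = 2 * Real.cos (s / 2) ^ 2 - 1 := Real.cos_two_mul _
    have hpy : Real.sin (s / 2) ^ 2 + Real.cos (s / 2) ^ 2 = 1 := Real.sin_sq_add_cos_sq _
    rw [show 2 * (s / 2) = s by ring] at hc2
    linarith
  have h12 : s / 2 ≤ 1 := by linarith
  have hsin : s / 2 - (s / 2) ^ 3 / 4 < Real.sin (s / 2) := by
    have := Real.sin_gt_sub_cube (by linarith : 0 < s / 2)
    nlinarith [pow_pos (by linarith : (0:ℝ) < s / 2) 3]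
  have hcube : s ^ 3 ≤ 1.5708 ^ 2 * s := by
    nlinarith [mul_le_mul_of_nonneg_right
      (mul_le_mul hs2 hs2 hs0.le (by norm_num)) hs0.le]
  have hlb : 0 ≤ s / 2 - (s / 2) ^ 3 / 4 := by nlinarith
  have hsq : (s / 2 - (s / 2) ^ 3 / 4) ^ 2 ≤ Real.sin (s / 2) ^ 2 := by nlinarith
  have hs2sq : s ^ 2 ≤ 2.4675 := by nlinarith
  have hgoal : (7 : ℝ) / 20 * s ^ 2 ≤ 2 * (s / 2 - (s / 2) ^ 3 / 4) ^ 2 := by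
    nlinarith [mul_nonneg (sq_nonneg s) (sq_nonneg ((2.4675:ℝ) - s ^ 2)),
      mul_nonneg (sq_nonneg s) (sub_nonneg.2 hs2sq)]
  have hys : y ^ 2 = s ^ 2 := (sq_abs y).symm
  rw [hcos, h2m, hys]
  linarith

set_option maxHeartbeats 2000000 in
theorem g_shift_bound (x y : ℝ) (hy : |y| ≤ π / 2)
    (h0 : (x, y) ≠ (0, 0)) (h1 : (x + 1, y) ≠ (0, 0)) :
    (Real.cosh (x + 1) - Real.cos y) / ((x + 1) ^ 2 + y ^ 2)
      ≤ Real.exp 1 * ((Real.exp 1 ^ 2 + Real.exp 1 + 1) / (Real.exp 1 ^ 2 + Real.exp 1)) ^ 2 *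
        ((Real.cosh x - Real.cos y) / (x ^ 2 + y ^ 2)) := by
  have hyIcc := abs_le.1 hy
  have hcos0 : 0 ≤ Real.cos y :=
    Real.cos_nonneg_of_mem_Icc ⟨by linarith [hyIcc.1], hyIcc.2⟩
  have hcos1 : Real.cos y ≤ 1 := Real.cos_le_one y
  set C := Real.exp 1 * ((Real.exp 1 ^ 2 + Real.exp 1 + 1) / (Real.exp 1 ^ 2 + Real.exp 1)) ^ 2
    with hC
  have hC328 : (3.28 : ℝ) ≤ C := by rw [hC]; exact aux_C_lb
  have hC1 : (1 : ℝ) ≤ C := by linarith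
  have hC0 : (0 : ℝ) ≤ C := by linarith
  have hD0 : 0 < x ^ 2 + y ^ 2 := aux_pos h0
  have hD1 : 0 < (x + 1) ^ 2 + y ^ 2 := aux_pos h1
  have hN1 : 0 ≤ Real.cosh (x + 1) - Real.cos y := by linarith [Real.one_le_cosh (x + 1)]
  have hN0 : 0 ≤ Real.cosh x - Real.cos y := by linarith [Real.one_le_cosh x]
  rcases le_or_gt x (-1) with hx | hx
  · -- case x ≤ -1
    have key := aux_mono (a := -(x + 1)) (b := -x) (y := y) (by linarith) (by linarith)
    rw [Real.cosh_neg, Real.cosh_neg] at key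
    have key' : (Real.cosh (x + 1) - Real.cos y) * (x ^ 2 + y ^ 2)
        ≤ (Real.cosh x - Real.cos y) * ((x + 1) ^ 2 + y ^ 2) := by
      have e1 : (-(x + 1)) ^ 2 = (x + 1) ^ 2 := by ring
      have e2 : (-x) ^ 2 = x ^ 2 := by ring
      rwa [e1, e2] at key
    have step1 : (Real.cosh (x + 1) - Real.cos y) / ((x + 1) ^ 2 + y ^ 2)
        ≤ (Real.cosh x - Real.cos y) / (x ^ 2 + y ^ 2) := by
      rw [div_le_div_iff₀ hD1 hD0]; linarith
    have step2 : (Real.cosh x - Real.cos y) / (x ^ 2 + y ^ 2)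
        ≤ C * ((Real.cosh x - Real.cos y) / (x ^ 2 + y ^ 2)) := by
      nlinarith [mul_nonneg (sub_nonneg.2 hC1) (div_nonneg hN0 hD0.le)]
    linarith
  rcases le_or_gt x 2 with hx2 | hx2
  · -- case -1 < x ≤ 2
    have M := aux_mono (a := x + 1) (b := 3) (y := y) (by linarith) (by linarith)
    norm_num at M
    have h9 : (0 : ℝ) < 9 + y ^ 2 := by positivity
    have hcosh3 : (1 : ℝ) ≤ Real.cosh 3 := Real.one_le_cosh 3
    have step : ((Real.cosh (x + 1) - Real.cos y) * 9) * (9 + y ^ 2)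
        ≤ (Real.cosh 3 * ((x + 1) ^ 2 + y ^ 2)) * (9 + y ^ 2) := by
      nlinarith [M, mul_nonneg (mul_nonneg hD1.le (sq_nonneg y)) (le_trans zero_le_one hcosh3),
        mul_nonneg hD1.le hcos0]
    have up : (Real.cosh (x + 1) - Real.cos y) / ((x + 1) ^ 2 + y ^ 2) ≤ Real.cosh 3 / 9 := by
      rw [div_le_div_iff₀ hD1 (by norm_num : (0 : ℝ) < 9)]
      exact le_of_mul_le_mul_right step h9
    have low : (7 : ℝ) / 20 ≤ (Real.cosh x - Real.cos y) / (x ^ 2 + y ^ 2) := by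
      by_cases hy0 : y = 0
      · subst hy0
        have hx0 : x ≠ 0 := by intro h; exact h0 (by simp [h])
        have hsh : (x / 2) ^ 2 ≤ Real.sinh (x / 2) ^ 2 := by
          have ha1 : |x / 2| ≤ Real.sinh |x / 2| := Real.self_le_sinh_iff.2 (abs_nonneg _)
          have ha2 : |Real.sinh (x / 2)| = Real.sinh |x / 2| := Real.abs_sinh (x / 2)
          nlinarith [sq_abs (x / 2), sq_abs (Real.sinh (x / 2)), abs_nonneg (x / 2)]
        have hch : x ^ 2 / 2 ≤ Real.cosh x - 1 := by
          rw [aux_cosh_half x]; nlinarith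
        rw [le_div_iff₀ hD0]
        simp only [Real.cos_zero]
        nlinarith [sq_nonneg x]
      · have M0 := aux_mono (a := 0) (b := |x|) (y := y) le_rfl (abs_nonneg x)
        rw [Real.cosh_zero, Real.cosh_abs, sq_abs] at M0
        norm_num at M0
        have hy2 : 0 < y ^ 2 :=
          lt_of_le_of_ne (sq_nonneg y) (Ne.symm (pow_ne_zero 2 hy0))
        have hJ : (7 : ℝ) / 20 * y ^ 2 ≤ 1 - Real.cos y := aux_J hy0 hy
        rw [le_div_iff₀ hD0]
        have t1 : (7 : ℝ) / 20 * (x ^ 2 + y ^ 2) * y ^ 2 ≤ (1 - Real.cos y) * (x ^ 2 + y ^ 2) :=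
          by nlinarith [mul_le_mul_of_nonneg_right hJ hD0.le]
        have t2 : ((7 : ℝ) / 20 * (x ^ 2 + y ^ 2)) * y ^ 2
            ≤ (Real.cosh x - Real.cos y) * y ^ 2 := by nlinarith [M0]
        exact le_of_mul_le_mul_right t2 hy2
    have key3 : Real.cosh 3 / 9 ≤ C * (7 / 20) := by
      have h38 := aux_cosh3_ub
      nlinarith [hC328]
    calc (Real.cosh (x + 1) - Real.cos y) / ((x + 1) ^ 2 + y ^ 2)
        ≤ Real.cosh 3 / 9 := up
      _ ≤ C * (7 / 20) := key3
      _ ≤ C * ((Real.cosh x - Real.cos y) / (x ^ 2 + y ^ 2)) :=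
          mul_le_mul_of_nonneg_left low hC0
  · -- case x > 2
    have hk := aux_key2 (le_of_lt hx2)
    rw [← hC] at hk
    have hnum : Real.cosh (x + 1) - Real.cos y ≤ C * (Real.cosh x - Real.cos y) := by
      nlinarith [hk, mul_nonneg (sub_nonneg.2 hC1) (sub_nonneg.2 hcos1)]
    have hmono : x ^ 2 + y ^ 2 ≤ (x + 1) ^ 2 + y ^ 2 := by nlinarith
    have hfin := div_le_div₀ (mul_nonneg hC0 hN0) hnum hD0 hmono
    rw [mul_div_assoc] at hfin
    exact hfin
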